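/- arXiv:1610.04344 — 2 statements merged into one kernel-verified Lean document; each statement's English description precedes it below -/
import Mathlib

section
/- Define φ(x) = Σ_{n=1}^∞ (-1)^{n+1} exp(-π n² x) and ϕ(x) = φ(x) - φ(x/4) for x > 0. Then ϕ(1/x) = ϕ(x) √x for all x > 0. -/
open Real

noncomputable def phi (x : ℝ) : ℝ :=
  ∑' n : ℕ, (-1 : ℝ) ^ ((n + 1) + 1) * Real.exp (-Real.pi * ((n : ℝ) + 1) ^ 2 * x)

noncomputable def phiA (x : ℝ) : ℝ := phi x - phi (x / 4)


noncomputable def psi (x : ℝ) : ℝ :=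
  ∑' n : ℕ, Real.exp (-Real.pi * ((n : ℝ) + 1) ^ 2 * x)

lemma summable_psi {x : ℝ} (hx : 0 < x) :
    Summable (fun n : ℕ => Real.exp (-Real.pi * ((n : ℝ) + 1) ^ 2 * x)) := by
  have hr0 : (0:ℝ) ≤ Real.exp (-Real.pi * x) := (Real.exp_pos _).le
  have hr1 : Real.exp (-Real.pi * x) < 1 := by
    rw [Real.exp_lt_one_iff]
    nlinarith [Real.pi_pos]
  refine Summable.of_nonneg_of_le (fun n => (Real.exp_pos _).le) (fun n => ?_)
    (summable_geometric_of_lt_one hr0 hr1)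
  rw [← Real.exp_nat_mul]
  apply Real.exp_le_exp.2
  have h : (0:ℝ) ≤ Real.pi * x := by positivity
  nlinarith [mul_nonneg h (by positivity : (0:ℝ) ≤ (n:ℝ)^2 + (n:ℝ) + 1)]

lemma summable_psi_even {x : ℝ} (hx : 0 < x) :
    Summable (fun k : ℕ => Real.exp (-Real.pi * (((2*k : ℕ) : ℝ) + 1) ^ 2 * x)) := by
  refine Summable.of_nonneg_of_le (fun n => (Real.exp_pos _).le) (fun k => ?_)
    (summable_psi hx)
  apply Real.exp_le_exp.2
  push_cast
  have h : (0:ℝ) ≤ Real.pi * x := by positivity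
  nlinarith [mul_nonneg h (by positivity : (0:ℝ) ≤ 3*(k:ℝ)^2 + 2*(k:ℝ))]

lemma psi_odd_eq {x : ℝ} :
    (fun k : ℕ => Real.exp (-Real.pi * (((2*k+1 : ℕ) : ℝ) + 1) ^ 2 * x))
      = fun k : ℕ => Real.exp (-Real.pi * ((k : ℝ) + 1) ^ 2 * (4*x)) := by
  funext k; congr 1; push_cast; ring

lemma phi_eq_psi {x : ℝ} (hx : 0 < x) : phi x = psi x - 2 * psi (4*x) := by
  have h4x : 0 < 4*x := by linarith
  have ha : Summable (fun n : ℕ => Real.exp (-Real.pi * ((n : ℝ) + 1) ^ 2 * x)) :=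
    summable_psi hx
  have he := summable_psi_even hx
  have ho : Summable (fun k : ℕ => Real.exp (-Real.pi * (((2*k+1 : ℕ) : ℝ) + 1) ^ 2 * x)) := by
    rw [psi_odd_eq]; exact summable_psi h4x
  have hodd : (∑' k : ℕ, Real.exp (-Real.pi * (((2*k+1 : ℕ) : ℝ) + 1) ^ 2 * x)) = psi (4*x) := by
    rw [psi_odd_eq]; rfl
  have hpsi : psi x = (∑' k : ℕ, Real.exp (-Real.pi * (((2*k : ℕ) : ℝ) + 1) ^ 2 * x))
      + ∑' k : ℕ, Real.exp (-Real.pi * (((2*k+1 : ℕ) : ℝ) + 1) ^ 2 * x) :=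
    (tsum_even_add_odd (f := fun n : ℕ => Real.exp (-Real.pi * ((n : ℝ) + 1) ^ 2 * x)) he ho).symm
  have hphi : phi x = (∑' k : ℕ, Real.exp (-Real.pi * (((2*k : ℕ) : ℝ) + 1) ^ 2 * x))
      - ∑' k : ℕ, Real.exp (-Real.pi * (((2*k+1 : ℕ) : ℝ) + 1) ^ 2 * x) := by
    have h1 : phi x = ∑' n : ℕ, (-1:ℝ)^n * Real.exp (-Real.pi * ((n : ℝ) + 1) ^ 2 * x) := by
      unfold phi
      exact tsum_congr fun n => by rw [pow_succ, pow_succ]; ring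
    have he' : Summable (fun k : ℕ =>
        (-1:ℝ)^(2*k) * Real.exp (-Real.pi * (((2*k : ℕ) : ℝ) + 1) ^ 2 * x)) := by
      refine he.congr fun k => ?_
      rw [(even_two_mul k).neg_one_pow, one_mul]
    have ho' : Summable (fun k : ℕ =>
        (-1:ℝ)^(2*k+1) * Real.exp (-Real.pi * (((2*k+1 : ℕ) : ℝ) + 1) ^ 2 * x)) := by
      refine ho.neg.congr fun k => ?_
      rw [(odd_two_mul_add_one k).neg_one_pow]; ring
    rw [h1, ← tsum_even_add_odd (f := fun n : ℕ => (-1:ℝ)^n * Real.exp (-Real.pi * ((n : ℝ) + 1) ^ 2 * x)) he' ho']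
    congr 1
    · exact tsum_congr fun k => by rw [(even_two_mul k).neg_one_pow, one_mul]
    · rw [← tsum_neg]
      exact tsum_congr fun k => by rw [(odd_two_mul_add_one k).neg_one_pow]; ring
  rw [hphi, ← hodd]
  rw [hpsi]
  ring

lemma int_sum_eq {x : ℝ} (hx : 0 < x) :
    (∑' n : ℤ, Real.exp (-Real.pi * (n : ℝ) ^ 2 * x)) = 1 + 2 * psi x := by
  have h1 : Summable (fun n : ℕ =>
      Real.exp (-Real.pi * (((n : ℤ) + 1 : ℤ) : ℝ) ^ 2 * x)) := by
    refine (summable_psi hx).congr fun n => ?_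
    congr 2; push_cast; ring
  have h2 : Summable (fun n : ℕ =>
      Real.exp (-Real.pi * ((-((n : ℤ) + 1) : ℤ) : ℝ) ^ 2 * x)) := by
    refine (summable_psi hx).congr fun n => ?_
    congr 2; push_cast; ring
  rw [tsum_of_add_one_of_neg_add_one (f := fun n : ℤ => Real.exp (-Real.pi * (n : ℝ) ^ 2 * x)) h1 h2]
  have e1 : (∑' n : ℕ, Real.exp (-Real.pi * (((n : ℤ) + 1 : ℤ) : ℝ) ^ 2 * x)) = psi x :=
    tsum_congr fun n => by congr 2; push_cast; ring
  have e2 : (∑' n : ℕ, Real.exp (-Real.pi * ((-((n : ℤ) + 1) : ℤ) : ℝ) ^ 2 * x)) = psi x :=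
    tsum_congr fun n => by congr 2; push_cast; ring
  rw [e1, e2]
  norm_num
  ring

lemma psi_inv {x : ℝ} (hx : 0 < x) :
    psi (1/x) = Real.sqrt x * psi x + (Real.sqrt x - 1)/2 := by
  have key := Real.tsum_exp_neg_mul_int_sq hx
  have l1 : (∑' n : ℤ, Real.exp (-Real.pi * x * (n : ℝ) ^ 2)) = 1 + 2 * psi x := by
    rw [← int_sum_eq hx]
    exact tsum_congr fun n => by ring_nf
  have hx' : 0 < 1/x := by positivity
  have l2 : (∑' n : ℤ, Real.exp (-Real.pi / x * (n : ℝ) ^ 2)) = 1 + 2 * psi (1/x) := by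
    rw [← int_sum_eq hx']
    exact tsum_congr fun n => by rw [div_eq_mul_inv, one_div]; ring_nf
  rw [l1, l2, ← Real.sqrt_eq_rpow] at key
  have hs : Real.sqrt x ≠ 0 := by positivity
  have hs2 : Real.sqrt x * (1 / Real.sqrt x) = 1 := by field_simp
  have : Real.sqrt x * (1 + 2 * psi x) = 1 + 2 * psi (1/x) := by
    rw [key, ← mul_assoc, hs2, one_mul]
  linarith [this]

lemma sqrt4 : Real.sqrt 4 = 2 := by
  rw [show (4:ℝ) = 2^2 by norm_num, Real.sqrt_sq (by norm_num)]

/-- The functional equation `ϕ(1/x) = ϕ(x)√x` for `ϕ(x) = φ(x) - φ(x/4)`. -/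
theorem phiA_functional_equation (x : ℝ) (hx : 0 < x) :
    phiA (1 / x) = phiA x * Real.sqrt x := by
  have hx4 : 0 < x/4 := by linarith
  have h4x : 0 < 4*x := by linarith
  have hix : 0 < 1/x := by positivity
  have hix4 : 0 < 1/x/4 := by positivity
  unfold phiA
  rw [phi_eq_psi hix, phi_eq_psi hix4, phi_eq_psi hx, phi_eq_psi hx4,
    show 4*(1/x) = 1/(x/4) by field_simp,
    show 1/x/4 = 1/(4*x) by rw [div_div, mul_comm],
    show 4*(1/(4*x)) = 1/x by field_simp,
    show 4*(x/4) = x by ring,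
    psi_inv hx, psi_inv hx4, psi_inv h4x,
    show Real.sqrt (x/4) = Real.sqrt x / 2 by
      rw [Real.sqrt_div hx.le, sqrt4],
    show Real.sqrt (4*x) = 2 * Real.sqrt x by
      rw [Real.sqrt_mul (by norm_num), sqrt4]]
  ring
end

section
/- For all x ≥ 1 and every nonnegative integer m, the quantity T_m(x) = -exp(-πx(4m+1)²/4) + 2 exp(-πx(4m+2)²/4) - exp(-πx(4m+3)²/4) is strictly negative. -/
/-- For `x ≥ 1` and `m ≥ 0`, the term
`T_m(x) = -exp(-πx(4m+1)²/4) + 2 exp(-πx(4m+2)²/4) - exp(-πx(4m+3)²/4)`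
is strictly negative. -/
theorem T_m_neg (x : ℝ) (hx : 1 ≤ x) (m : ℕ) :
    -Real.exp (-Real.pi * x * (4 * (m : ℝ) + 1) ^ 2 / 4)
      + 2 * Real.exp (-Real.pi * x * (4 * (m : ℝ) + 2) ^ 2 / 4)
      - Real.exp (-Real.pi * x * (4 * (m : ℝ) + 3) ^ 2 / 4) < 0 := by
  set A := -Real.pi * x * (4 * (m : ℝ) + 1) ^ 2 / 4 with hA
  set B := -Real.pi * x * (4 * (m : ℝ) + 2) ^ 2 / 4 with hB
  have hpi := Real.pi_gt_three
  have hm : (0 : ℝ) ≤ (m : ℝ) := Nat.cast_nonneg m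
  have hdiff : 2 ≤ A - B := by
    have : A - B = Real.pi * x * (8 * (m : ℝ) + 3) / 4 := by ring
    rw [this]
    have h1 : (3 : ℝ) ≤ Real.pi * x := by nlinarith
    nlinarith
  have h2 : (2 : ℝ) < Real.exp (A - B) := by
    have := Real.add_one_le_exp (A - B)
    linarith
  have key : 2 * Real.exp B < Real.exp A := by
    have : Real.exp A = Real.exp B * Real.exp (A - B) := by
      rw [← Real.exp_add]; ring_nf
    rw [this]
    have hb := Real.exp_pos B
    nlinarith
  have hc := Real.exp_pos (-Real.pi * x * (4 * (m : ℝ) + 3) ^ 2 / 4)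
  linarith
end
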